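/- Let p ∈ ℕ with p ≥ 1, ω > 0, θ ∈ 𝒮(p,ω), and λ > 0. Then for all real numbers t₀ and t with t ≥ t₀, the family (e^{−λ(t−θ_k)}) indexed by the indices k ∈ ℤ with θ_k ≤ t₀ is summable, and its sum satisfies ∑_{k : θ_k ≤ t₀} e^{−λ(t−θ_k)} ≤ (p/(1 − e^{−λω})) e^{−λ(t−t₀)}. -/
import Mathlib


open Filter Topology

noncomputable section

/-- `𝒮(p,ω)`: strictly increasing sequences `θ : ℤ → ℝ` with `|θ k| → ∞` as `|k| → ∞`
and `θ (k+p) = θ k + ω` for all `k`. -/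
def SSeq (p : ℕ) (ω : ℝ) (θ : ℤ → ℝ) : Prop :=
  StrictMono θ ∧ Tendsto (fun k : ℤ => |θ k|) (cocompact ℤ) atTop ∧
    ∀ k : ℤ, θ (k + (p : ℤ)) = θ k + ω

/-- for `θ ∈ 𝒮(p,ω)`, `lam > 0` and `t₀ ≤ t`, the family
`e^{-lam (t - θ k)}` over indices `k` with `θ k ≤ t₀` is summable and its sum is at most
`(p / (1 - e^{-lam ω})) e^{-lam (t - t₀)}`. -/
theorem statement10 (p : ℕ) (hp : 1 ≤ p) (ω : ℝ) (hω : 0 < ω) (θ : ℤ → ℝ)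
    (hθ : SSeq p ω θ) (lam : ℝ) (hlam : 0 < lam) (t₀ t : ℝ) (h : t₀ ≤ t) :
    Summable (fun k : {k : ℤ // θ k ≤ t₀} => Real.exp (-lam * (t - θ k.1))) ∧
    ∑' k : {k : ℤ // θ k ≤ t₀}, Real.exp (-lam * (t - θ k.1)) ≤
      (p : ℝ) / (1 - Real.exp (-lam * ω)) * Real.exp (-lam * (t - t₀)) := by
  obtain ⟨hmono, -, hper⟩ := hθ
  have hp0 : 0 < p := hp
  -- shift lemma
  have hshift : ∀ (k : ℤ) (m : ℕ), θ (k - p * m) = θ k - m * ω := by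
    intro k m
    induction m with
    | zero => simp
    | succ n ih =>
      have h1 := hper (k - p * ((n : ℤ) + 1))
      have h2 : k - (p : ℤ) * ((n : ℤ) + 1) + p = k - p * n := by ring
      rw [h2] at h1
      push_cast
      push_cast at ih
      have : θ (k - (p:ℤ) * ((n:ℤ)+1)) = θ (k - (p:ℤ)*(n:ℤ)) - ω := by linarith
      rw [this, ih]; ring
  -- nonempty
  obtain ⟨n₁, hn₁⟩ := exists_nat_ge ((θ 0 - t₀) / ω)
  have hmem : θ (0 - (p:ℤ) * n₁) ≤ t₀ := by
    rw [hshift]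
    have := (div_le_iff₀ hω).mp hn₁
    linarith
  -- bounded above
  obtain ⟨n₂, hn₂⟩ := exists_nat_ge ((t₀ - θ 0) / ω + 1)
  have hub : ∀ k : ℤ, θ k ≤ t₀ → k ≤ (p:ℤ) * n₂ := by
    intro k hk
    by_contra hlt
    push_neg at hlt
    have h3 := hshift ((p:ℤ) * n₂) n₂
    simp only [sub_self] at h3
    have h4 : t₀ < θ ((p:ℤ) * n₂) := by
      have h6 : t₀ - θ 0 < (n₂:ℝ) * ω := by
        nlinarith [(div_le_iff₀ hω).mp (by linarith : (t₀ - θ 0)/ω ≤ (n₂:ℝ) - 1)]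
      linarith
    exact absurd (hmono hlt).le (not_le.mpr (lt_of_le_of_lt hk h4))
  obtain ⟨k₀, hk₀mem, hk₀max⟩ :=
    Int.exists_greatest_of_bdd (P := fun k => θ k ≤ t₀) ⟨(p:ℤ) * n₂, hub⟩ ⟨0 - (p:ℤ) * n₁, hmem⟩
  set q := Real.exp (-lam * ω) with hq
  set c := Real.exp (-lam * (t - t₀)) with hc
  have hq0 : 0 ≤ q := Real.exp_nonneg _
  have hq1 : q < 1 := by
    rw [hq, Real.exp_lt_one_iff]
    nlinarith
  -- the comparison function
  set g : Fin p × ℕ → ℝ := fun x => c * q ^ x.2 with hg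
  have hgslice : ∀ b : Fin p, Summable fun n : ℕ => g (b, n) := fun b =>
    (summable_geometric_of_lt_one hq0 hq1).mul_left c
  have hgnonneg : ∀ x, 0 ≤ g x := fun x => by
    apply mul_nonneg (Real.exp_nonneg _) (pow_nonneg hq0 _)
  have hgsum : Summable g := by
    rw [summable_prod_of_nonneg hgnonneg]
    exact ⟨hgslice, Summable.of_finite⟩
  -- the injection
  set e : {k : ℤ // θ k ≤ t₀} → Fin p × ℕ := fun k =>
    (⟨(k₀ - k.1).toNat % p, Nat.mod_lt _ hp0⟩, (k₀ - k.1).toNat / p) with he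
  have hkle : ∀ k : {k : ℤ // θ k ≤ t₀}, k.1 ≤ k₀ := fun k => hk₀max _ k.2
  have htoNat : ∀ k : {k : ℤ // θ k ≤ t₀}, ((k₀ - k.1).toNat : ℤ) = k₀ - k.1 := fun k =>
    Int.toNat_of_nonneg (by linarith [hkle k])
  have heinj : Function.Injective e := by
    intro a b hab
    rw [he] at hab
    have h1 : (k₀ - a.1).toNat % p = (k₀ - b.1).toNat % p :=
      congrArg Fin.val (congrArg Prod.fst hab)
    have h2 : (k₀ - a.1).toNat / p = (k₀ - b.1).toNat / p := congrArg Prod.snd hab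
    have h3 : (k₀ - a.1).toNat = (k₀ - b.1).toNat := by
      rw [← Nat.div_add_mod (k₀ - a.1).toNat p, ← Nat.div_add_mod (k₀ - b.1).toNat p, h1, h2]
    have h4 : k₀ - a.1 = k₀ - b.1 := by
      rw [← htoNat a, ← htoNat b, h3]
    exact Subtype.ext (by linarith)
  -- the pointwise bound
  have hbound : ∀ k : {k : ℤ // θ k ≤ t₀}, Real.exp (-lam * (t - θ k.1)) ≤ g (e k) := by
    intro k
    set d := (k₀ - k.1).toNat with hd
    set m := d / p with hm
    have hle1 : k.1 ≤ k₀ - (p:ℤ) * m := by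
      have h5 : (m * p : ℕ) ≤ d := Nat.div_mul_le_self d p
      have h6 : ((m * p : ℕ) : ℤ) ≤ (d : ℤ) := Int.ofNat_le.mpr h5
      have h7 := htoNat k
      push_cast at h6
      nlinarith
    have hθle : θ k.1 ≤ t₀ - m * ω := by
      calc θ k.1 ≤ θ (k₀ - (p:ℤ) * m) := hmono.monotone hle1
        _ = θ k₀ - m * ω := hshift k₀ m
        _ ≤ t₀ - m * ω := by linarith [hk₀mem]
    have hexp : -lam * (t - θ k.1) ≤ -lam * (t - t₀) + (m : ℝ) * (-lam * ω) := by
      nlinarith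
    calc Real.exp (-lam * (t - θ k.1))
        ≤ Real.exp (-lam * (t - t₀) + (m : ℝ) * (-lam * ω)) := Real.exp_le_exp.mpr hexp
      _ = c * q ^ m := by rw [Real.exp_add, Real.exp_nat_mul, hc, hq]
      _ = g (e k) := rfl
  -- conclusion
  have hfnonneg : ∀ k : {k : ℤ // θ k ≤ t₀}, 0 ≤ Real.exp (-lam * (t - θ k.1)) := fun k =>
    Real.exp_nonneg _
  have hfsum : Summable (fun k : {k : ℤ // θ k ≤ t₀} => Real.exp (-lam * (t - θ k.1))) :=
    Summable.of_nonneg_of_le hfnonneg hbound (hgsum.comp_injective heinj)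
  refine ⟨hfsum, ?_⟩
  have hle : ∑' k : {k : ℤ // θ k ≤ t₀}, Real.exp (-lam * (t - θ k.1)) ≤ ∑' x, g x :=
    Summable.tsum_le_tsum_of_inj e heinj (fun x _ => hgnonneg x) hbound hfsum hgsum
  have hgval : ∑' x, g x = (p : ℝ) / (1 - q) * c := by
    rw [Summable.tsum_prod' hgsum hgslice]
    have : ∀ b : Fin p, ∑' n : ℕ, g (b, n) = c * (1 - q)⁻¹ := by
      intro b
      simp only [hg]
      rw [tsum_mul_left, tsum_geometric_of_lt_one hq0 hq1]
    rw [tsum_fintype]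
    rw [Finset.sum_congr rfl (fun b _ => this b)]
    simp [Finset.sum_const]
    field_simp
  rw [hgval] at hle
  exact hle
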